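/- Let b > 0 and q, q' ∈ ℝ, and let ν_q and ν_{q'} denote the pushforwards of Lap(b) under the maps x ↦ x + q and x ↦ x + q', respectively (the Laplace mechanism applied to query values q and q'). Then for every measurable set S ⊆ ℝ, ν_q(S) ≤ exp(|q − q'|/b)·ν_{q'}(S). In particular, if |q − q'| ≤ Δ and b = Δ/ε, the Laplace mechanism is ε-differentially private. -/

import Mathlib

open MeasureTheory

/-- The Laplace distribution on `ℝ` with scale `b`. -/
noncomputable def Lap (b : ℝ) : Measure ℝ :=
  volume.withDensity fun x => ENNReal.ofReal ((2 * b)⁻¹ * Real.exp (-|x| / b))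

/-- Privacy of the Laplace mechanism: the output distributions on query values `q` and
`q'` satisfy `ν_q(S) ≤ exp(|q − q'|/b) · ν_{q'}(S)` for every measurable `S`. -/
theorem laplace_mechanism_dp (b : ℝ) (hb : 0 < b) (q q' : ℝ)
    (S : Set ℝ) (hS : MeasurableSet S) :
    (Lap b).map (fun x => x + q) S ≤
      ENNReal.ofReal (Real.exp (|q - q'| / b)) * (Lap b).map (fun x => x + q') S := by
  set f : ℝ → ENNReal := fun x => ENNReal.ofReal ((2 * b)⁻¹ * Real.exp (-|x| / b)) with hf
  have hfm : Measurable f := by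
    apply Measurable.ennreal_ofReal
    exact (measurable_const.mul ((measurable_neg.comp measurable_abs).div_const b).exp)
  have hmapq : (Lap b).map (fun x => x + q) S
      = ∫⁻ x, ((fun x => x + q) ⁻¹' S).indicator f x := by
    rw [Measure.map_apply (measurable_add_const q) hS, Lap,
      withDensity_apply _ (hS.preimage (measurable_add_const q)), ← lintegral_indicator]
    exact hS.preimage (measurable_add_const q)
  have hmapq' : (Lap b).map (fun x => x + q') S
      = ∫⁻ x, ((fun x => x + q') ⁻¹' S).indicator f x := by
    rw [Measure.map_apply (measurable_add_const q') hS, Lap,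
      withDensity_apply _ (hS.preimage (measurable_add_const q')), ← lintegral_indicator]
    exact hS.preimage (measurable_add_const q')
  rw [hmapq, hmapq']
  -- translate the q' integral
  have htrans : (∫⁻ x, ((fun x => x + q') ⁻¹' S).indicator f x)
      = ∫⁻ x, ((fun x => x + q) ⁻¹' S).indicator (fun y => f (y + (q - q'))) x := by
    rw [← lintegral_add_right_eq_self (fun x => ((fun x => x + q') ⁻¹' S).indicator f x) (q - q')]
    congr 1
    funext x
    have hmem : (x + (q - q')) ∈ (fun x => x + q') ⁻¹' S ↔ x ∈ (fun x => x + q) ⁻¹' S := by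
      simp [Set.mem_preimage]
      ring_nf
    by_cases h : x ∈ (fun x => x + q) ⁻¹' S
    · rw [Set.indicator_of_mem (hmem.mpr h), Set.indicator_of_mem h]
    · rw [Set.indicator_of_notMem (fun hc => h (hmem.mp hc)), Set.indicator_of_notMem h]
  rw [htrans, ← lintegral_const_mul']
  · apply lintegral_mono
    intro x
    by_cases h : x ∈ (fun x => x + q) ⁻¹' S
    · simp only [Set.indicator_of_mem h]
      rw [← ENNReal.ofReal_mul (Real.exp_nonneg _)]
      apply ENNReal.ofReal_le_ofReal
      rw [show Real.exp (|q - q'| / b) * ((2 * b)⁻¹ * Real.exp (-|x + (q - q')| / b))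
          = (2 * b)⁻¹ * (Real.exp (|q - q'| / b) * Real.exp (-|x + (q - q')| / b)) by ring,
        ← Real.exp_add]
      apply mul_le_mul_of_nonneg_left _ (by positivity)
      apply Real.exp_le_exp.mpr
      rw [← add_div, div_le_div_iff_of_pos_right hb]
      have := abs_add_le x (q - q')
      linarith
    · simp only [Set.indicator_of_notMem h]
      simp
  · exact ENNReal.ofReal_ne_top
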